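/- arXiv:2502.04107 — 3 statements merged into one kernel-verified Lean document; each statement's English description precedes it below -/
import Mathlib

section
/- Let Ω ⊆ ℝⁿ be open, x ∈ Ω with r₀ := dist(x, Ωᶜ) > 0, and suppose there is a constant c₁ > 0 and R > 2r₀ such that |Ωᶜ ∩ B_ρ(x)| ≥ c₁ ρⁿ for all ρ ∈ (2r₀, R). Then for s ∈ (0,1), ∫_{Ωᶜ} |y − x|^{-(n+2s)} dy ≥ c₁ (2s)^{-1} ((2r₀)^{-2s} − R^{-2s}). -/
open MeasureTheory Metric

theorem riesz_integral_lower_bound_from_density (n : ℕ) (hn : 1 ≤ n) (s : ℝ)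
    (hs : s ∈ Set.Ioo (0:ℝ) 1)
    (Ω : Set (EuclideanSpace ℝ (Fin n))) (hΩ : IsOpen Ω)
    (x : EuclideanSpace ℝ (Fin n)) (hx : x ∈ Ω)
    (r₀ : ℝ) (hr₀ : r₀ = Metric.infDist x Ωᶜ) (hr₀pos : 0 < r₀)
    (c₁ R : ℝ) (hc₁ : 0 < c₁) (hR : 2 * r₀ < R)
    (hdens : ∀ ρ ∈ Set.Ioo (2 * r₀) R,
      ENNReal.ofReal (c₁ * ρ ^ (n : ℝ)) ≤ volume (Ωᶜ ∩ Metric.ball x ρ)) :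
    ENNReal.ofReal (c₁ * (2*s)⁻¹ * ((2*r₀) ^ (-(2*s)) - R ^ (-(2*s))))
      ≤ ∫⁻ y in Ωᶜ, ENNReal.ofReal (‖y - x‖ ^ (-(n + 2*s))) := by
  obtain ⟨hs0, hs1⟩ := hs
  set a : ℝ := (n : ℝ) + 2 * s with ha
  have hs2 : 0 < 2 * s := by linarith
  have ha1 : 1 ≤ a := by
    have h1 : (1 : ℝ) ≤ (n : ℝ) := by exact_mod_cast hn
    simp only [ha]; linarith
  have ha0 : 0 < a := lt_of_lt_of_le one_pos ha1
  have hna : (n : ℝ) < a := by simp only [ha]; linarith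
  have hr2 : 0 < 2 * r₀ := by linarith
  have hRpos : 0 < R := lt_trans hr2 hR
  set t₁ : ℝ := R ^ (-a) with ht₁def
  set t₂ : ℝ := (2 * r₀) ^ (-a) with ht₂def
  have ht₁0 : 0 < t₁ := Real.rpow_pos_of_pos hRpos _
  have ht₂0 : 0 < t₂ := Real.rpow_pos_of_pos hr2 _
  have ht12 : t₁ < t₂ := Real.rpow_lt_rpow_of_neg hr2 hR (by linarith)
  have hinv : ∀ u : ℝ, 0 < u → (u ^ (-a)) ^ (-a⁻¹) = u := by
    intro u hu
    rw [← Real.rpow_mul hu.le, neg_mul_neg, mul_inv_cancel₀ ha0.ne', Real.rpow_one]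
  -- the integrand is measurable
  have hmble : Measurable (fun y : EuclideanSpace ℝ (Fin n) => ‖y - x‖ ^ (-a)) := by
    fun_prop
  have hΩc : MeasurableSet Ωᶜ := hΩ.isClosed_compl.measurableSet
  -- layer cake
  have hlc : ∫⁻ y in Ωᶜ, ENNReal.ofReal (‖y - x‖ ^ (-a))
      = ∫⁻ t in Set.Ioi (0:ℝ), (volume.restrict Ωᶜ) {y | t < ‖y - x‖ ^ (-a)} :=
    lintegral_eq_lintegral_meas_lt _
      (Filter.Eventually.of_forall fun y => Real.rpow_nonneg (norm_nonneg _) _)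
      hmble.aemeasurable
  -- pointwise lower bound on the layer measure, for t ∈ Ioo t₁ t₂
  have key : ∀ t ∈ Set.Ioo t₁ t₂,
      ENNReal.ofReal (c₁ * t ^ (-((n:ℝ)/a))) ≤ (volume.restrict Ωᶜ) {y | t < ‖y - x‖ ^ (-a)} := by
    rintro t ⟨ht1, ht2⟩
    have ht0 : 0 < t := lt_trans ht₁0 ht1
    set ρ : ℝ := t ^ (-a⁻¹) with hρdef
    have hρ0 : 0 < ρ := Real.rpow_pos_of_pos ht0 _
    have hainv : (-a⁻¹ : ℝ) < 0 := neg_lt_zero.mpr (inv_pos.mpr ha0)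
    have hρmem : ρ ∈ Set.Ioo (2 * r₀) R := by
      constructor
      · have h := Real.rpow_lt_rpow_of_neg ht0 ht2 hainv
        rwa [ht₂def, hinv _ hr2] at h
      · have h := Real.rpow_lt_rpow_of_neg ht₁0 ht1 hainv
        rwa [ht₁def, hinv _ hRpos] at h
    have hsub : Ωᶜ ∩ Metric.ball x ρ ⊆ {y | t < ‖y - x‖ ^ (-a)} ∩ Ωᶜ := by
      rintro y ⟨hyΩ, hyb⟩
      refine ⟨?_, hyΩ⟩
      have hy0 : 0 < ‖y - x‖ := by
        have h1 : r₀ ≤ dist x y := hr₀ ▸ Metric.infDist_le_dist_of_mem hyΩ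
        have h2 : dist x y = ‖y - x‖ := by rw [dist_eq_norm, norm_sub_rev]
        linarith
      have hlt : ‖y - x‖ < ρ := mem_ball_iff_norm.mp hyb
      have h3 : ρ ^ (-a) < ‖y - x‖ ^ (-a) :=
        Real.rpow_lt_rpow_of_neg hy0 hlt (by linarith)
      have hρa : ρ ^ (-a) = t := by
        rw [hρdef, ← Real.rpow_mul ht0.le, neg_mul_neg, inv_mul_cancel₀ ha0.ne', Real.rpow_one]
      rw [hρa] at h3
      exact h3
    have hρn : c₁ * t ^ (-((n:ℝ)/a)) = c₁ * ρ ^ (n : ℝ) := by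
      have hexp : -((n:ℝ)/a) = -a⁻¹ * n := by ring
      rw [hρdef, ← Real.rpow_mul ht0.le, hexp]
    calc ENNReal.ofReal (c₁ * t ^ (-((n:ℝ)/a)))
        = ENNReal.ofReal (c₁ * ρ ^ (n : ℝ)) := by rw [hρn]
      _ ≤ volume (Ωᶜ ∩ Metric.ball x ρ) := hdens ρ hρmem
      _ ≤ volume ({y | t < ‖y - x‖ ^ (-a)} ∩ Ωᶜ) := measure_mono hsub
      _ = (volume.restrict Ωᶜ) {y | t < ‖y - x‖ ^ (-a)} := by
          rw [Measure.restrict_apply (measurableSet_lt measurable_const hmble)]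
  -- compute the lower integral over Ioo t₁ t₂
  have hp : (-1 : ℝ) < -((n:ℝ)/a) := by
    have : (n:ℝ)/a < 1 := (div_lt_one ha0).mpr hna
    linarith
  have hD : 0 ≤ (2*r₀) ^ (-(2*s)) - R ^ (-(2*s)) := by
    have := Real.rpow_lt_rpow_of_neg hr2 hR (show -(2*s) < 0 by linarith)
    linarith
  have hval : ∫ t in Set.Ioo t₁ t₂, c₁ * t ^ (-((n:ℝ)/a))
      = c₁ * (a/(2*s)) * ((2*r₀) ^ (-(2*s)) - R ^ (-(2*s))) := by
    rw [← integral_Ioc_eq_integral_Ioo, ← intervalIntegral.integral_of_le ht12.le]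
    rw [intervalIntegral.integral_const_mul]
    rw [integral_rpow (Or.inl hp)]
    have e2 : t₂ ^ (-((n:ℝ)/a) + 1) = (2*r₀) ^ (-(2*s)) := by
      rw [ht₂def, ← Real.rpow_mul hr2.le]
      congr 1
      field_simp
      rw [ha]; ring
    have e1 : t₁ ^ (-((n:ℝ)/a) + 1) = R ^ (-(2*s)) := by
      rw [ht₁def, ← Real.rpow_mul hRpos.le]
      congr 1
      field_simp
      rw [ha]; ring
    rw [e1, e2]
    have hea : -((n:ℝ)/a) + 1 = 2*s/a := by
      rw [ha]; field_simp; ring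
    rw [hea]
    field_simp
  have hintg : IntegrableOn (fun t : ℝ => c₁ * t ^ (-((n:ℝ)/a))) (Set.Ioo t₁ t₂) volume := by
    have hcont : ContinuousOn (fun t : ℝ => c₁ * t ^ (-((n:ℝ)/a))) (Set.Icc t₁ t₂) :=
      continuousOn_const.mul (ContinuousOn.rpow_const continuousOn_id
        (fun u hu => Or.inl (ne_of_gt (lt_of_lt_of_le ht₁0 hu.1))))
    exact (hcont.integrableOn_compact isCompact_Icc).mono_set Set.Ioo_subset_Icc_self
  have hnn : 0 ≤ᵐ[volume.restrict (Set.Ioo t₁ t₂)] fun t : ℝ => c₁ * t ^ (-((n:ℝ)/a)) := by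
    refine (ae_restrict_iff' measurableSet_Ioo).mpr (Filter.Eventually.of_forall fun u hu => ?_)
    exact mul_nonneg hc₁.le (Real.rpow_nonneg (le_of_lt (lt_trans ht₁0 hu.1)) _)
  have hint : ENNReal.ofReal (c₁ * (2*s)⁻¹ * ((2*r₀) ^ (-(2*s)) - R ^ (-(2*s))))
      ≤ ∫⁻ t in Set.Ioo t₁ t₂, ENNReal.ofReal (c₁ * t ^ (-((n:ℝ)/a))) := by
    rw [← ofReal_integral_eq_lintegral_ofReal hintg hnn, hval]
    apply ENNReal.ofReal_le_ofReal
    have h2s : 0 < (2*s)⁻¹ := inv_pos.mpr hs2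
    have : c₁ * (2*s)⁻¹ ≤ c₁ * (a/(2*s)) := by
      rw [div_eq_mul_inv]
      nlinarith [mul_le_mul_of_nonneg_right ha1 (mul_pos hc₁ h2s).le]
    nlinarith
  calc ENNReal.ofReal (c₁ * (2*s)⁻¹ * ((2*r₀) ^ (-(2*s)) - R ^ (-(2*s))))
      ≤ ∫⁻ t in Set.Ioo t₁ t₂, ENNReal.ofReal (c₁ * t ^ (-((n:ℝ)/a))) := hint
    _ ≤ ∫⁻ t in Set.Ioo t₁ t₂, (volume.restrict Ωᶜ) {y | t < ‖y - x‖ ^ (-a)} :=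
        setLIntegral_mono' measurableSet_Ioo key
    _ ≤ ∫⁻ t in Set.Ioi (0:ℝ), (volume.restrict Ωᶜ) {y | t < ‖y - x‖ ^ (-a)} :=
        lintegral_mono_set (fun u hu => lt_trans ht₁0 hu.1)
    _ = ∫⁻ y in Ωᶜ, ENNReal.ofReal (‖y - x‖ ^ (-a)) := hlc.symm
end

section
/- Let Ω ⊆ ℝⁿ be open satisfying the exterior corkscrew condition (P_{R,κ}) (for all 0 < r < R and z ∈ ∂Ω there is a ball of radius κr contained in Ωᶜ ∩ B_r(z)). Then there exist θ = θ(n, κ) ∈ (0,1) and C = C(n, κ) > 0 such that for all z ∈ ∂Ω, all r ∈ (0, 1/2), and all ρ ∈ (0, 2R), the Lebesgue measure of the set {x : 0 < dist(x, Ωᶜ) < rρ} ∩ B_ρ(z) is at most C r^θ |B_ρ|. -/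
set_option maxHeartbeats 1000000

open MeasureTheory Metric ENNReal


lemma exists_frontier_dist_eq {n : ℕ} {Ω : Set (EuclideanSpace ℝ (Fin n))} (hΩ : IsOpen Ω)
    {x : EuclideanSpace ℝ (Fin n)} (hx : 0 < Metric.infDist x Ωᶜ) :
    ∃ y ∈ frontier Ω, dist x y = Metric.infDist x Ωᶜ := by
  have hne : (Ωᶜ : Set _).Nonempty := by
    by_contra h
    rw [Set.not_nonempty_iff_eq_empty] at h
    rw [h, Metric.infDist_empty] at hx
    exact lt_irrefl 0 hx
  obtain ⟨y, hyc, hyd⟩ := (hΩ.isClosed_compl).exists_infDist_eq_dist hne x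
  refine ⟨y, ?_, hyd.symm⟩
  rw [hΩ.frontier_eq]
  refine ⟨?_, hyc⟩
  rw [Metric.mem_closure_iff]
  intro ε hε
  have hdxy : 0 < dist x y := by rw [← hyd]; exact hx
  set t : ℝ := max 0 (1 - ε / (2 * dist x y)) with ht
  have ht0 : 0 ≤ t := le_max_left _ _
  have ht1 : t < 1 := by
    apply max_lt one_pos
    have : 0 < ε / (2 * dist x y) := div_pos hε (by linarith)
    linarith
  set w := AffineMap.lineMap (k := ℝ) x y t with hw
  have hdw : dist w x = t * dist x y := by
    rw [hw, dist_lineMap_left, Real.norm_eq_abs, abs_of_nonneg ht0]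
  have hwΩ : w ∈ Ω := by
    by_contra hwx
    have h1 : Metric.infDist x Ωᶜ ≤ dist x w := Metric.infDist_le_dist_of_mem hwx
    rw [dist_comm x w, hdw, hyd] at h1
    nlinarith
  refine ⟨w, hwΩ, ?_⟩
  have hwy : dist w y = (1 - t) * dist x y := by
    rw [hw, dist_lineMap_right, Real.norm_eq_abs, abs_of_nonneg (by linarith)]
  rw [dist_comm y w, hwy]
  have h1t : 1 - t ≤ ε / (2 * dist x y) := by
    have h := le_max_right (0:ℝ) (1 - ε / (2 * dist x y))
    linarith
  calc (1 - t) * dist x y ≤ (ε / (2 * dist x y)) * dist x y := by nlinarith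
    _ = ε / 2 := by field_simp
    _ < ε := by linarith


lemma corkscrew_step {n : ℕ} (hn : 1 ≤ n) {R κ : ℝ} (hR : 0 < R) (hκ : 0 < κ)
    {Ω : Set (EuclideanSpace ℝ (Fin n))} (hΩ : IsOpen Ω)
    (hcork : ∀ r ∈ Set.Ioo (0:ℝ) R, ∀ z ∈ frontier Ω,
      ∃ x' : EuclideanSpace ℝ (Fin n),
        Metric.ball x' (κ * r) ⊆ Ωᶜ ∩ Metric.ball z r)
    (hfr : (frontier Ω).Nonempty)
    {l : ℝ} (hl0 : 0 < l) (hlκ : l ≤ κ/4) (hl8 : l ≤ 1/8)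
    {s t : ℝ} (hs : 0 < s) (hsR : s < 2*R) (z : EuclideanSpace ℝ (Fin n)) :
    ENNReal.ofReal (1 + (l/2)^n) *
      volume ({x | Metric.infDist x (frontier Ω) < l*s} ∩ Metric.ball z (t - 3*s))
    ≤ volume ({x | Metric.infDist x (frontier Ω) < s} ∩ Metric.ball z t) := by
  classical
  haveI : Nonempty (Fin n) := ⟨⟨0, by omega⟩⟩
  set F : Set (EuclideanSpace ℝ (Fin n)) := {x | Metric.infDist x (frontier Ω) < l*s} ∩ Metric.ball z (t - 3*s) with hF
  set D : Set (EuclideanSpace ℝ (Fin n)) := {x | Metric.infDist x (frontier Ω) < s} ∩ Metric.ball z t with hD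
  have hΩne : Ω.Nonempty := by
    by_contra h
    rw [Set.not_nonempty_iff_eq_empty] at h
    rw [h, frontier_empty] at hfr
    exact Set.not_nonempty_empty hfr
  have hFD : F ⊆ D := by
    intro x hx
    refine ⟨?_, Metric.ball_subset_ball (by linarith) hx.2⟩
    have := hx.1
    simp only [Set.mem_setOf_eq] at this ⊢
    nlinarith
  -- maximal 2s-separated subset of F
  set Sep : Set (Set (EuclideanSpace ℝ (Fin n))) := {S | S ⊆ F ∧ S.Pairwise fun a b => 2*s ≤ dist a b} with hSep
  obtain ⟨S, hSmax⟩ := zorn_subset Sep (by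
    intro c hc hchain
    refine ⟨⋃₀ c, ⟨?_, ?_⟩, fun u hu => Set.subset_sUnion_of_mem hu⟩
    · exact Set.sUnion_subset fun u hu => (hc hu).1
    · intro a ha b hb hab
      obtain ⟨u, huc, hau⟩ := ha
      obtain ⟨v, hvc, hbv⟩ := hb
      rcases hchain.total huc hvc with h | h
      · exact (hc hvc).2 (h hau) hbv hab
      · exact (hc huc).2 hau (h hbv) hab)
  have hSF : S ⊆ F := hSmax.prop.1
  have hSsep : S.Pairwise fun a b => 2*s ≤ dist a b := hSmax.prop.2
  have cover : F ⊆ ⋃ x ∈ S, Metric.ball x (2*s) := by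
    intro p hp
    by_contra hpc
    have hps : ∀ x ∈ S, 2*s ≤ dist p x := by
      intro x hx
      by_contra h
      push_neg at h
      exact hpc (Set.mem_biUnion hx (by simpa [Metric.mem_ball] using h))
    have hmem : insert p S ∈ Sep := by
      refine ⟨Set.insert_subset hp hSF, ?_⟩
      rw [Set.pairwise_insert]
      exact ⟨hSsep, fun b hb _ => ⟨hps b hb, by rw [dist_comm]; exact hps b hb⟩⟩
    have hpS : p ∈ S := hSmax.2 hmem (Set.subset_insert p S) (Set.mem_insert p S)
    have := hps p hpS
    simp only [dist_self] at this
    linarith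
  -- choose corkscrew data
  have hdata : ∀ x : S, ∃ z' c : EuclideanSpace ℝ (Fin n), z' ∈ frontier Ω ∧ dist (x:EuclideanSpace ℝ (Fin n)) z' < l*s ∧
      Metric.ball c (κ * (s/2)) ⊆ Ωᶜ ∩ Metric.ball z' (s/2) := by
    rintro ⟨x, hx⟩
    have hx1 : Metric.infDist x (frontier Ω) < l*s := (hSF hx).1
    obtain ⟨z', hz', hdz'⟩ := (Metric.infDist_lt_iff hfr).1 hx1
    obtain ⟨c, hc⟩ := hcork (s/2) ⟨by linarith, by linarith⟩ z' hz'
    exact ⟨z', c, hz', hdz', hc⟩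
  choose zf cf hzf hdzf hcf using hdata
  set H : S → Set (EuclideanSpace ℝ (Fin n)) := fun x => Metric.ball (cf x) (l*s) with hH
  have hcz : ∀ x : S, dist (cf x) (zf x) < s/2 := by
    intro x
    have : cf x ∈ Ωᶜ ∩ Metric.ball (zf x) (s/2) :=
      hcf x (Metric.mem_ball_self (by positivity))
    exact this.2
  have hHball : ∀ x : S, H x ⊆ Metric.ball (x:EuclideanSpace ℝ (Fin n)) s := by
    intro x w hw
    simp only [hH, Metric.mem_ball] at hw ⊢
    have h4 := dist_triangle4 w (cf x) (zf x) (x:EuclideanSpace ℝ (Fin n))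
    have := hcz x
    have hd := hdzf x
    rw [dist_comm (zf x) (x:EuclideanSpace ℝ (Fin n))] at h4
    nlinarith
  have hHD : ∀ x : S, H x ⊆ D := by
    intro x w hw
    simp only [hH, Metric.mem_ball] at hw
    constructor
    · have h1 : Metric.infDist w (frontier Ω) ≤ dist w (zf x) :=
        Metric.infDist_le_dist_of_mem (hzf x)
      have h2 := dist_triangle w (cf x) (zf x)
      have := hcz x
      simp only [Set.mem_setOf_eq]
      nlinarith
    · have hwx : dist w (x:EuclideanSpace ℝ (Fin n)) < s := by
        have := hHball x hw
        simpa [Metric.mem_ball] using this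
      have hxz : dist (x:EuclideanSpace ℝ (Fin n)) z < t - 3*s := by
        have := (hSF x.2).2
        simpa [Metric.mem_ball] using this
      have := dist_triangle w (x:EuclideanSpace ℝ (Fin n)) z
      simp only [Metric.mem_ball]
      linarith
  have hHnotF : ∀ x : S, ∀ w ∈ H x, l*s ≤ Metric.infDist w (frontier Ω) := by
    intro x w hw
    simp only [hH, Metric.mem_ball] at hw
    have hΩlow : ∀ p ∈ Ω, l*s ≤ dist w p := by
      intro p hp
      have hpc : p ∉ Metric.ball (cf x) (κ * (s/2)) := by
        intro hmem
        exact (hcf x hmem).1 hp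
      simp only [Metric.mem_ball, not_lt] at hpc
      rw [dist_comm] at hpc
      have htri := dist_triangle (cf x) w p
      rw [dist_comm (cf x) w] at htri
      nlinarith [mul_nonneg (by linarith : (0:ℝ) ≤ κ/4 - l) hs.le]
    have hΩinf : l*s ≤ Metric.infDist w Ω := by
      by_contra h
      push_neg at h
      obtain ⟨p, hp, hdp⟩ := (Metric.infDist_lt_iff hΩne).1 h
      exact absurd hdp (not_lt.2 (hΩlow p hp))
    calc l*s ≤ Metric.infDist w Ω := hΩinf
      _ = Metric.infDist w (closure Ω) := (Metric.infDist_closure).symm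
      _ ≤ Metric.infDist w (frontier Ω) :=
          Metric.infDist_le_infDist_of_subset frontier_subset_closure hfr
  have hdisjF : Disjoint F (⋃ x : S, H x) := by
    rw [Set.disjoint_iUnion_right]
    intro x
    rw [Set.disjoint_left]
    intro w hwF hwH
    exact absurd hwF.1 (not_lt.2 (hHnotF x w hwH))
  have hHdisj : Pairwise (Function.onFun Disjoint H) := by
    intro a b hab
    have hne : (a:EuclideanSpace ℝ (Fin n)) ≠ (b:EuclideanSpace ℝ (Fin n)) := fun h => hab (Subtype.coe_injective h)
    have hsep : 2*s ≤ dist (a:EuclideanSpace ℝ (Fin n)) (b:EuclideanSpace ℝ (Fin n)) := hSsep a.2 b.2 hne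
    have : Disjoint (Metric.ball (a:EuclideanSpace ℝ (Fin n)) s) (Metric.ball (b:EuclideanSpace ℝ (Fin n)) s) :=
      Metric.ball_disjoint_ball (by linarith)
    exact this.mono (hHball a) (hHball b)
  have hScount : S.Countable := by
    apply Set.PairwiseDisjoint.countable_of_isOpen
      (s := fun x : EuclideanSpace ℝ (Fin n) => Metric.ball x s) (a := S)
    · intro a ha b hb hab
      exact Metric.ball_disjoint_ball (by linarith [hSsep ha hb hab])
    · exact fun x _ => Metric.isOpen_ball
    · exact fun x _ => ⟨x, Metric.mem_ball_self hs⟩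
  haveI := hScount.to_subtype
  set u := volume (Metric.ball (0:EuclideanSpace ℝ (Fin n)) 1) with hu
  have hvol : ∀ (x : EuclideanSpace ℝ (Fin n)) (r : ℝ), 0 ≤ r →
      volume (Metric.ball x r) = ENNReal.ofReal (r^n) * u := by
    intro x r hr
    rw [hu, Measure.addHaar_ball volume x hr, finrank_euclideanSpace_fin]
  have hFcov : volume F ≤ ∑' x : S, volume (Metric.ball (x:EuclideanSpace ℝ (Fin n)) (2*s)) := by
    calc volume F ≤ volume (⋃ x ∈ S, Metric.ball x (2*s)) := measure_mono cover
      _ = volume (⋃ x : S, Metric.ball (x:EuclideanSpace ℝ (Fin n)) (2*s)) := by rw [Set.biUnion_eq_iUnion]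
      _ ≤ ∑' x : S, volume (Metric.ball (x:EuclideanSpace ℝ (Fin n)) (2*s)) := measure_iUnion_le _
  have hsumH : ∑' x : S, volume (H x)
      = ENNReal.ofReal ((l/2)^n) * ∑' x : S, volume (Metric.ball (x:EuclideanSpace ℝ (Fin n)) (2*s)) := by
    rw [← ENNReal.tsum_mul_left]
    congr 1
    funext x
    rw [hvol _ _ (by positivity), hvol _ _ (by linarith), ← mul_assoc,
      ← ENNReal.ofReal_mul (by positivity)]
    congr 2
    rw [← mul_pow]
    ring_nf
  have hHle : ENNReal.ofReal ((l/2)^n) * volume F ≤ ∑' x : S, volume (H x) := by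
    rw [hsumH]
    exact mul_le_mul_of_nonneg_left hFcov (by positivity)
  have hDge : volume F + ENNReal.ofReal ((l/2)^n) * volume F ≤ volume D := by
    have hsub : F ∪ (⋃ x : S, H x) ⊆ D :=
      Set.union_subset hFD (Set.iUnion_subset fun x => hHD x)
    have hmeasU : MeasurableSet (⋃ x : S, H x) :=
      MeasurableSet.iUnion fun x => Metric.isOpen_ball.measurableSet
    calc volume F + ENNReal.ofReal ((l/2)^n) * volume F
        ≤ volume F + ∑' x : S, volume (H x) := add_le_add le_rfl hHle
      _ = volume F + volume (⋃ x : S, H x) := by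
          rw [measure_iUnion hHdisj fun x => Metric.isOpen_ball.measurableSet]
      _ = volume (F ∪ ⋃ x : S, H x) := (measure_union hdisjF hmeasU).symm
      _ ≤ volume D := measure_mono hsub
  calc ENNReal.ofReal (1 + (l/2)^n) * volume F
      = volume F + ENNReal.ofReal ((l/2)^n) * volume F := by
        rw [ENNReal.ofReal_add (by norm_num) (by positivity), ENNReal.ofReal_one, add_mul, one_mul]
    _ ≤ volume D := hDge

lemma corkscrew_iter {n : ℕ} (hn : 1 ≤ n) {R κ : ℝ} (hR : 0 < R) (hκ : 0 < κ)
    {Ω : Set (EuclideanSpace ℝ (Fin n))} (hΩ : IsOpen Ω)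
    (hcork : ∀ r ∈ Set.Ioo (0:ℝ) R, ∀ z ∈ frontier Ω,
      ∃ x' : EuclideanSpace ℝ (Fin n),
        Metric.ball x' (κ * r) ⊆ Ωᶜ ∩ Metric.ball z r)
    (hfr : (frontier Ω).Nonempty)
    {l : ℝ} (hl0 : 0 < l) (hlκ : l ≤ κ/4) (hl8 : l ≤ 1/8)
    {ρ : ℝ} (hρ : 0 < ρ) (hρR : ρ < 2*R) (z : EuclideanSpace ℝ (Fin n)) :
    ∀ j : ℕ, ENNReal.ofReal (1 + (l/2)^n) ^ j *
      volume ({x | Metric.infDist x (frontier Ω) < l^j * ρ}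
        ∩ Metric.ball z (ρ * (1 + 3*l^j/(1-l))))
      ≤ volume (Metric.ball z (ρ * (1 + 3/(1-l)))) := by
  intro j
  induction j with
  | zero =>
    simp only [pow_zero, one_mul, mul_one]
    exact measure_mono (Set.inter_subset_right.trans (by norm_num))
  | succ j ih =>
    have hl1 : l < 1 := by linarith
    have h1l : (0:ℝ) < 1 - l := by linarith
    have hlj : (0:ℝ) < l^j := pow_pos hl0 j
    have hlj1 : l^j ≤ 1 := pow_le_one₀ hl0.le hl1.le
    have hs : 0 < l^j * ρ := mul_pos hlj hρ
    have hsR : l^j * ρ < 2*R := lt_of_le_of_lt (by nlinarith) hρR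
    have key := corkscrew_step hn hR hκ hΩ hcork hfr hl0 hlκ hl8 hs hsR
      (t := ρ * (1 + 3*l^j/(1-l))) z
    have hscale : l * (l^j * ρ) = l^(j+1) * ρ := by ring
    have hradius : ρ * (1 + 3*l^j/(1-l)) - 3*(l^j*ρ) = ρ * (1 + 3*l^(j+1)/(1-l)) := by
      field_simp
      ring
    rw [hscale, hradius] at key
    calc ENNReal.ofReal (1 + (l/2)^n) ^ (j+1) *
        volume ({x | Metric.infDist x (frontier Ω) < l^(j+1) * ρ}
          ∩ Metric.ball z (ρ * (1 + 3*l^(j+1)/(1-l))))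
        = ENNReal.ofReal (1 + (l/2)^n) ^ j * (ENNReal.ofReal (1 + (l/2)^n) *
          volume ({x | Metric.infDist x (frontier Ω) < l^(j+1) * ρ}
            ∩ Metric.ball z (ρ * (1 + 3*l^(j+1)/(1-l))))) := by
          rw [pow_succ, mul_assoc]
      _ ≤ ENNReal.ofReal (1 + (l/2)^n) ^ j *
          volume ({x | Metric.infDist x (frontier Ω) < l^j * ρ}
            ∩ Metric.ball z (ρ * (1 + 3*l^j/(1-l)))) := mul_le_mul_of_nonneg_left key (by positivity)
      _ ≤ volume (Metric.ball z (ρ * (1 + 3/(1-l)))) := ih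

theorem tubular_neighborhood_estimate_from_corkscrew (n : ℕ) (hn : 2 ≤ n)
    (R κ : ℝ) (hR : 0 < R) (hκ : 0 < κ) (hκR : κ < R) :
    ∃ θ ∈ Set.Ioo (0:ℝ) 1, ∃ C > (0:ℝ),
      ∀ Ω : Set (EuclideanSpace ℝ (Fin n)), IsOpen Ω →
        (∀ r ∈ Set.Ioo (0:ℝ) R, ∀ z ∈ frontier Ω,
          ∃ x' : EuclideanSpace ℝ (Fin n),
            Metric.ball x' (κ * r) ⊆ Ωᶜ ∩ Metric.ball z r) →
        ∀ z ∈ frontier Ω, ∀ r ∈ Set.Ioo (0:ℝ) (1/2), ∀ ρ ∈ Set.Ioo (0:ℝ) (2*R),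
          volume ({x | 0 < Metric.infDist x Ωᶜ ∧ Metric.infDist x Ωᶜ < r * ρ}
              ∩ Metric.ball z ρ)
            ≤ ENNReal.ofReal (C * r ^ θ) * volume (Metric.ball z ρ) := by
  have hn1 : 1 ≤ n := by omega
  haveI : Nonempty (Fin n) := ⟨⟨0, by omega⟩⟩
  set l : ℝ := min (κ/4) (1/8) with hldef
  have hl0 : 0 < l := lt_min (by positivity) (by norm_num)
  have hl8 : l ≤ 1/8 := min_le_right _ _
  have hlκ : l ≤ κ/4 := min_le_left _ _
  have hl1 : l < 1 := by linarith
  set ε : ℝ := (l/2)^n with hεdef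
  have hε0 : 0 < ε := by positivity
  have hε1 : ε ≤ 1 := pow_le_one₀ (by positivity) (by linarith)
  have hll : Real.log l < 0 := Real.log_neg hl0 hl1
  have hlog1ε : 0 < Real.log (1+ε) := Real.log_pos (by linarith)
  set θ : ℝ := Real.log (1+ε) / (-Real.log l) with hθdef
  have hθ0 : 0 < θ := div_pos hlog1ε (by linarith)
  have hθ1 : θ < 1 := by
    rw [hθdef, div_lt_one (by linarith)]
    have h2 : Real.log (1+ε) ≤ Real.log 2 := Real.log_le_log (by linarith) (by linarith)
    have h8 : Real.log l ≤ Real.log (1/8) := Real.log_le_log hl0 hl8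
    have : Real.log (1/8 : ℝ) = -Real.log 8 := by
      rw [one_div, Real.log_inv]
    have h28 : Real.log 2 < Real.log 8 := Real.log_lt_log (by norm_num) (by norm_num)
    linarith
  set K : ℝ := 1 + 3/(1-l) with hKdef
  have h1l : (0:ℝ) < 1 - l := by linarith
  have hK1 : 1 ≤ K := by
    have h : 0 ≤ 3/(1-l) := by positivity
    rw [hKdef]
    linarith
  have hK0 : 0 < K := by linarith
  refine ⟨θ, ⟨hθ0, hθ1⟩, (1+ε)*K^n, by positivity, ?_⟩
  intro Ω hΩ hcork z hz r hr ρ hρ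
  have hfr : (frontier Ω).Nonempty := ⟨z, hz⟩
  obtain ⟨hr0, hr2⟩ := hr
  obtain ⟨hρ0, hρ2R⟩ := hρ
  set j : ℕ := ⌊Real.log r / Real.log l⌋₊ with hjdef
  have hrl : Real.log r < 0 := Real.log_neg hr0 (by linarith)
  have hratio0 : 0 ≤ Real.log r / Real.log l := by
    have := div_nonneg (neg_nonneg.2 hrl.le) (neg_nonneg.2 hll.le)
    rwa [neg_div_neg_eq] at this
  have hjle : (j:ℝ) ≤ Real.log r / Real.log l := Nat.floor_le hratio0
  have hjgt : Real.log r / Real.log l < (j:ℝ) + 1 := Nat.lt_floor_add_one _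
  have hrlj : r ≤ l^j := by
    have h1 : Real.log r ≤ (j:ℝ) * Real.log l := by
      have := (le_div_iff_of_neg hll).1 hjle
      linarith [this]
    calc r = Real.exp (Real.log r) := (Real.exp_log hr0).symm
      _ ≤ Real.exp ((j:ℝ) * Real.log l) := Real.exp_le_exp.2 h1
      _ = l^j := by
          rw [← Real.log_pow, Real.exp_log (by positivity)]
  have hkey : 1 ≤ (1+ε)^(j+1) * r^θ := by
    have hA : ((j:ℝ)+1) * Real.log l ≤ Real.log r := le_of_lt ((div_lt_iff_of_neg hll).1 hjgt)
    set L : ℝ := -Real.log l with hLdef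
    have hL0 : 0 < L := by simp [hLdef]; linarith
    have hθL : θ * L = Real.log (1+ε) := by
      rw [hθdef]
      field_simp
    have hstep : -(((j:ℝ)+1) * L) ≤ Real.log r := by
      rw [hLdef]; linarith
    have h2 : θ * (-(((j:ℝ)+1) * L)) ≤ θ * Real.log r :=
      mul_le_mul_of_nonneg_left hstep hθ0.le
    have h3 : 0 ≤ θ * Real.log r + ((j:ℝ)+1) * Real.log (1+ε) := by
      have : θ * (-(((j:ℝ)+1) * L)) = -(((j:ℝ)+1) * (θ * L)) := by ring
      rw [this, hθL] at h2
      linarith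
    have hexp : Real.exp (θ * Real.log r + ((j:ℝ)+1) * Real.log (1+ε))
        = r^θ * (1+ε)^(j+1) := by
      rw [Real.exp_add]
      congr 1
      · rw [Real.rpow_def_of_pos hr0, mul_comm]
      · rw [show ((j:ℝ)+1) = ((j+1 : ℕ) : ℝ) by push_cast; ring,
          ← Real.log_pow, Real.exp_log (by positivity)]
    calc (1:ℝ) = Real.exp 0 := Real.exp_zero.symm
      _ ≤ Real.exp (θ * Real.log r + ((j:ℝ)+1) * Real.log (1+ε)) := Real.exp_le_exp.2 h3
      _ = r^θ * (1+ε)^(j+1) := hexp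
      _ = (1+ε)^(j+1) * r^θ := by ring
  -- inclusion
  have hincl : {x | 0 < Metric.infDist x Ωᶜ ∧ Metric.infDist x Ωᶜ < r*ρ}
      ∩ Metric.ball z ρ ⊆
      {x | Metric.infDist x (frontier Ω) < l^j*ρ}
      ∩ Metric.ball z (ρ * (1 + 3*l^j/(1-l))) := by
    rintro x ⟨⟨hx1, hx2⟩, hxball⟩
    have hlj0 : (0:ℝ) < l^j := pow_pos hl0 j
    constructor
    · obtain ⟨y, hyf, hyd⟩ := exists_frontier_dist_eq hΩ hx1
      have h1 : Metric.infDist x (frontier Ω) ≤ dist x y := Metric.infDist_le_dist_of_mem hyf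
      have h2 : dist x y < r*ρ := by rw [hyd]; exact hx2
      have hrρ : r*ρ ≤ l^j*ρ := mul_le_mul_of_nonneg_right hrlj hρ0.le
      simp only [Set.mem_setOf_eq]
      linarith
    · refine Metric.ball_subset_ball ?_ hxball
      have : 0 ≤ 3*l^j/(1-l) := by positivity
      nlinarith
  have hiter := corkscrew_iter hn1 hR hκ hΩ hcork hfr hl0 hlκ hl8 hρ0 hρ2R z j
  set c : ℝ≥0∞ := ENNReal.ofReal (1+ε) with hcdef
  have hc0 : c ≠ 0 := by
    simp [hcdef, ENNReal.ofReal_eq_zero]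
    linarith
  have hcT : c ≠ ⊤ := ENNReal.ofReal_ne_top
  have hcj0 : c^j ≠ 0 := pow_ne_zero j hc0
  have hcjT : c^j ≠ ⊤ := ENNReal.pow_ne_top hcT
  -- volume formulas
  set u := volume (Metric.ball (0 : EuclideanSpace ℝ (Fin n)) 1) with hu
  have hvol : ∀ (x : EuclideanSpace ℝ (Fin n)) (rr : ℝ), 0 ≤ rr →
      volume (Metric.ball x rr) = ENNReal.ofReal (rr^n) * u := by
    intro x rr hrr
    rw [hu, Measure.addHaar_ball volume x hrr, finrank_euclideanSpace_fin]
  have hBK : volume (Metric.ball z (ρ * K)) = ENNReal.ofReal (K^n) * volume (Metric.ball z ρ) := by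
    rw [hvol z (ρ*K) (by positivity), hvol z ρ hρ0.le, ← mul_assoc,
      ← ENNReal.ofReal_mul (by positivity)]
    congr 2
    rw [mul_pow]
    ring
  -- main chain
  have hmono : volume ({x | 0 < Metric.infDist x Ωᶜ ∧ Metric.infDist x Ωᶜ < r*ρ}
      ∩ Metric.ball z ρ) ≤
      volume ({x | Metric.infDist x (frontier Ω) < l^j*ρ}
        ∩ Metric.ball z (ρ * (1 + 3*l^j/(1-l)))) := measure_mono hincl
  have hfinal : volume ({x | Metric.infDist x (frontier Ω) < l^j*ρ}
      ∩ Metric.ball z (ρ * (1 + 3*l^j/(1-l))))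
      ≤ ENNReal.ofReal ((1+ε)*K^n * r^θ) * volume (Metric.ball z ρ) := by
    rw [← ENNReal.mul_le_mul_iff_right hcj0 hcjT]
    calc c^j * volume ({x | Metric.infDist x (frontier Ω) < l^j*ρ}
        ∩ Metric.ball z (ρ * (1 + 3*l^j/(1-l))))
        ≤ volume (Metric.ball z (ρ * (1 + 3/(1-l)))) := hiter
      _ = ENNReal.ofReal (K^n) * volume (Metric.ball z ρ) := hBK
      _ ≤ ENNReal.ofReal ((1+ε)^j * ((1+ε)*K^n * r^θ)) * volume (Metric.ball z ρ) := by
          refine mul_le_mul_of_nonneg_right ?_ (by positivity)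
          apply ENNReal.ofReal_le_ofReal
          have hrθ : 0 < r^θ := Real.rpow_pos_of_pos hr0 θ
          have hKn : (0:ℝ) < K^n := by positivity
          have : (1+ε)^j * ((1+ε)*K^n * r^θ) = ((1+ε)^(j+1) * r^θ) * K^n := by ring
          rw [this]
          nlinarith [hkey, hKn]
      _ = c^j * (ENNReal.ofReal ((1+ε)*K^n * r^θ) * volume (Metric.ball z ρ)) := by
          have hh : c ^ j * ENNReal.ofReal ((1+ε)*K^n * r^θ)
              = ENNReal.ofReal ((1+ε)^j * ((1+ε)*K^n * r^θ)) := by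
            rw [hcdef, ← ENNReal.ofReal_pow (by linarith), ← ENNReal.ofReal_mul (by positivity)]
          rw [← mul_assoc (c ^ j), hh]
  exact le_trans hmono hfinal
end

section
/- Let Ω ⊆ ℝⁿ be open with the exterior corkscrew condition (P_{R,κ}) and let L have kernel K with K(y) ≥ λ|y|^{−(n+2s)}. Then there exist d₀ = d₀(s, R, Ω) > 0 and c₀ = c₀(n, s, λ, κ) > 0 such that Lχ_Ω(x) ≥ c₀ dist(x, Ωᶜ)^{−2s} for all x ∈ Ω with dist(x, Ωᶜ) < d₀. -/
open MeasureTheory Metric ENNReal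

theorem L_indicator_lower_bound_corkscrew (n : ℕ) (hn : 2 ≤ n) (s lam : ℝ)
    (hs : s ∈ Set.Ioo (0:ℝ) 1) (hlam : 0 < lam)
    (R κ : ℝ) (hR : 0 < R) (hκ : 0 < κ) (hκR : κ < R)
    (Ω : Set (EuclideanSpace ℝ (Fin n))) (hΩ : IsOpen Ω)
    (hcork : ∀ r ∈ Set.Ioo (0:ℝ) R, ∀ z ∈ frontier Ω,
      ∃ x' : EuclideanSpace ℝ (Fin n),
        Metric.ball x' (κ * r) ⊆ Ωᶜ ∩ Metric.ball z r)
    (K : EuclideanSpace ℝ (Fin n) → ℝ≥0∞)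
    (hKlow : ∀ y : EuclideanSpace ℝ (Fin n), y ≠ 0 →
      ENNReal.ofReal (lam * ‖y‖ ^ (-(n + 2*s))) ≤ K y) :
    ∃ d₀ > (0:ℝ), ∃ c₀ > (0:ℝ),
      ∀ x ∈ Ω, Metric.infDist x Ωᶜ < d₀ →
        ENNReal.ofReal (c₀ * Metric.infDist x Ωᶜ ^ (-(2*s)))
          ≤ ∫⁻ y in Ωᶜ, K (x - y) := by
  have hs0 := hs.1
  have hV0 : (0:ℝ≥0∞) < volume (ball (0 : EuclideanSpace ℝ (Fin n)) 1) :=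
    measure_ball_pos _ _ one_pos
  have hVt : volume (ball (0 : EuclideanSpace ℝ (Fin n)) 1) ≠ ⊤ :=
    measure_ball_lt_top.ne
  set vol := (volume (ball (0 : EuclideanSpace ℝ (Fin n)) 1)).toReal with hvol
  have hvolpos : 0 < vol := ENNReal.toReal_pos hV0.ne' hVt
  refine ⟨R, hR, lam * 2 ^ (-((n:ℝ) + 2*s)) * κ ^ n * vol, by positivity, ?_⟩
  intro x hx hxd
  set d := Metric.infDist x Ωᶜ with hdd
  rcases Set.eq_empty_or_nonempty Ωᶜ with hce | hce
  · have : d = 0 := by rw [hdd, hce, Metric.infDist_empty]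
    rw [this, Real.zero_rpow (by nlinarith : -(2*s) ≠ 0), mul_zero, ENNReal.ofReal_zero]
    exact zero_le
  · have hclosed : IsClosed Ωᶜ := hΩ.isClosed_compl
    have hdpos : 0 < d := (hclosed.notMem_iff_infDist_pos hce).mp
      (by simpa using hx)
    obtain ⟨z, hzc, hzd⟩ := hclosed.exists_infDist_eq_dist hce x
    -- ball x d ⊆ Ω
    have hballΩ : ball x d ⊆ Ω := by
      intro y hy
      by_contra hyc
      exact absurd (Metric.infDist_le_dist_of_mem (s := Ωᶜ) hyc) (by
        rw [← hdd]; exact not_le.mpr (by simpa [dist_comm] using hy))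
    have hzfr : z ∈ frontier Ω := by
      rw [hΩ.frontier_eq]
      refine ⟨?_, hzc⟩
      have : z ∈ closedBall x d := by
        simp [Metric.mem_closedBall, dist_comm, hzd.le, hzd.ge]
        exact hzd.symm.le.trans hdd.symm.le
      rw [← closure_ball x hdpos.ne'] at this
      exact closure_mono hballΩ this
    obtain ⟨x', hball⟩ := hcork d ⟨hdpos, hxd⟩ z hzfr
    -- pointwise bound on the corkscrew ball
    have hκd : 0 < κ * d := mul_pos hκ hdpos
    have hpt : ∀ y ∈ ball x' (κ * d),
        ENNReal.ofReal (lam * (2*d) ^ (-((n:ℝ) + 2*s))) ≤ K (x - y) := by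
      intro y hy
      obtain ⟨hyc, hyz⟩ := hball hy
      have hxy : x ≠ y := fun h => hyc (h ▸ hx)
      have hne : x - y ≠ 0 := sub_ne_zero.mpr hxy
      have hnorm : ‖x - y‖ ≤ 2 * d := by
        have h1 : dist x z = d := hzd.symm
        have h2 : dist z y < d := by simpa [dist_comm] using hyz
        calc ‖x - y‖ = dist x y := (dist_eq_norm x y).symm
          _ ≤ dist x z + dist z y := dist_triangle x z y
          _ ≤ 2 * d := by rw [h1]; linarith
      refine le_trans ?_ (hKlow _ hne)
      refine ENNReal.ofReal_le_ofReal ?_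
      refine mul_le_mul_of_nonneg_left ?_ hlam.le
      exact Real.rpow_le_rpow_of_nonpos (norm_pos_iff.mpr hne) hnorm (by nlinarith)
    -- integral bound
    have hmain : ENNReal.ofReal (lam * (2*d) ^ (-((n:ℝ) + 2*s))) * volume (ball x' (κ * d))
        ≤ ∫⁻ y in Ωᶜ, K (x - y) := by
      calc ENNReal.ofReal (lam * (2*d) ^ (-((n:ℝ) + 2*s))) * volume (ball x' (κ * d))
          = ∫⁻ _ in ball x' (κ * d),
              ENNReal.ofReal (lam * (2*d) ^ (-((n:ℝ) + 2*s))) ∂volume :=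
            (setLIntegral_const _ _).symm
        _ ≤ ∫⁻ y in ball x' (κ * d), K (x - y) ∂volume :=
            setLIntegral_mono' measurableSet_ball hpt
        _ ≤ ∫⁻ y in Ωᶜ, K (x - y) :=
            lintegral_mono_set (hball.trans Set.inter_subset_left)
    refine le_trans (le_of_eq ?_) hmain
    haveI : Nonempty (Fin n) := ⟨⟨0, by omega⟩⟩
    haveI : Nontrivial (EuclideanSpace ℝ (Fin n)) := by
      infer_instance
    have hballvol : volume (ball x' (κ * d))
        = ENNReal.ofReal ((κ * d) ^ n) * volume (ball (0 : EuclideanSpace ℝ (Fin n)) 1) := by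
      rw [Measure.addHaar_ball _ _ hκd.le]
      congr 2
      simp
    rw [hballvol, ← ENNReal.ofReal_toReal hVt, ← hvol,
      ← ENNReal.ofReal_mul (by positivity), ← ENNReal.ofReal_mul (by positivity)]
    congr 1
    have hdn : d ^ (-((n:ℝ) + 2*s)) * d ^ (n : ℕ) = d ^ (-(2*s)) := by
      rw [← Real.rpow_natCast d n, ← Real.rpow_add hdpos]
      ring_nf
    have h2d : (2*d) ^ (-((n:ℝ) + 2*s)) = 2 ^ (-((n:ℝ) + 2*s)) * d ^ (-((n:ℝ) + 2*s)) :=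
      Real.mul_rpow (by norm_num) hdpos.le
    rw [h2d, mul_pow]
    rw [← hdn]; ring
end
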